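/- Let f be a probability density on ℝ with f = 0 outside (a,b) (where a < b ≤ ∞), and suppose that for some constants A > 0 and κ > 0 one has lim_{x→a+} f(x)/(x−a)^{κ−1} = A. Then lim_{ε→0+} (1/ε^κ)·( −log ∫_{a+ε}^b f(x) dx ) = A/κ. -/

import Mathlib

open MeasureTheory Set Filter Topology

lemma aux_integrableOn (a ε κ : ℝ) (hε : 0 < ε) (hκ : 0 < κ) :
    IntegrableOn (fun x => (x - a) ^ (κ - 1)) (Ioc a (a + ε)) := by
  have h := (intervalIntegral.intervalIntegrable_rpow' (a := 0) (b := ε) (r := κ - 1)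
    (by linarith)).comp_sub_right a
  rw [zero_add, add_comm] at h
  exact (intervalIntegrable_iff_integrableOn_Ioc_of_le (by linarith)).mp h

lemma aux_int (a ε κ : ℝ) (hε : 0 < ε) (hκ : 0 < κ) :
    ∫ x in Ioc a (a + ε), (x - a) ^ (κ - 1) = ε ^ κ / κ := by
  rw [← intervalIntegral.integral_of_le (by linarith : a ≤ a + ε)]
  rw [intervalIntegral.integral_comp_sub_right (fun u => u ^ (κ - 1)) a]
  simp only [sub_self, add_sub_cancel_left]
  rw [integral_rpow (Or.inl (by linarith))]
  have hκ1 : κ - 1 + 1 = κ := by ring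
  rw [hκ1, Real.zero_rpow hκ.ne']
  ring

theorem stmt14 (f : ℝ → ℝ) (a : ℝ)
    (hf_meas : Measurable f) (hf_nonneg : ∀ x, 0 ≤ f x)
    (hf_int : ∫ x, f x = 1)
    (hf_zero : ∀ x, x ≤ a → f x = 0)
    (A κ : ℝ) (hA : 0 < A) (hκ : 0 < κ)
    (h_asymp : Tendsto (fun x => f x / (x - a) ^ (κ - 1)) (𝓝[>] a) (𝓝 A)) :
    Tendsto (fun ε : ℝ => (-Real.log (∫ x in Ioi (a + ε), f x)) / ε ^ κ)
      (𝓝[>] (0 : ℝ)) (𝓝 (A / κ)) := by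
  have hf_integrable : Integrable f := by
    by_contra h
    rw [integral_undef h] at hf_int; norm_num at hf_int
  set F : ℝ → ℝ := fun ε => ∫ x in Ioc a (a + ε), f x with hFdef
  -- split the integral
  have hsplit : ∀ ε : ℝ, 0 < ε → (∫ x in Ioi (a + ε), f x) = 1 - F ε := by
    intro ε hε
    have h1 : (∫ x in Iic (a + ε), f x) + (∫ x in Ioi (a + ε), f x) = 1 := by
      rw [← hf_int]
      exact intervalIntegral.integral_Iic_add_Ioi hf_integrable.integrableOn hf_integrable.integrableOn
    have hunion : Iic a ∪ Ioc a (a + ε) = Iic (a + ε) :=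
      Iic_union_Ioc_eq_Iic (by linarith)
    have h2 : (∫ x in Iic (a + ε), f x) = F ε := by
      rw [← hunion, setIntegral_union (Iic_disjoint_Ioc le_rfl) measurableSet_Ioc
        hf_integrable.integrableOn hf_integrable.integrableOn]
      have h0 : (∫ x in Iic a, f x) = 0 := by
        rw [setIntegral_congr_fun measurableSet_Iic (g := fun _ => (0:ℝ))
          (fun x hx => hf_zero x hx)]
        simp
      rw [h0, zero_add]
    linarith [h2 ▸ h1]
  -- main estimate : F ε / ε^κ → A/κ
  have hFlim : Tendsto (fun ε => F ε / ε ^ κ) (𝓝[>] (0:ℝ)) (𝓝 (A / κ)) := by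
    rw [Metric.tendsto_nhds]
    intro δ hδ
    have hδ' : 0 < κ * δ / 2 := by positivity
    have hball := (Metric.tendsto_nhds.mp h_asymp) (κ * δ / 2) hδ'
    rw [eventually_nhdsWithin_iff, Metric.eventually_nhds_iff] at hball
    obtain ⟨η, hη, hηb⟩ := hball
    rw [eventually_nhdsWithin_iff, Metric.eventually_nhds_iff]
    refine ⟨η, hη, fun ε hdist hεpos => ?_⟩
    have hε : 0 < ε := hεpos
    have hεη : ε < η := by
      rw [Real.dist_eq, sub_zero, abs_of_pos hε] at hdist; exact hdist
    have hεκ : 0 < ε ^ κ := Real.rpow_pos_of_pos hε κ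
    have hbound : ∀ x ∈ Ioc a (a + ε),
        (A - κ * δ / 2) * (x - a) ^ (κ - 1) ≤ f x ∧
        f x ≤ (A + κ * δ / 2) * (x - a) ^ (κ - 1) := by
      intro x hx
      have hxa : 0 < x - a := sub_pos.mpr hx.1
      have hxd : dist x a < η := by
        rw [Real.dist_eq, abs_of_pos hxa]; linarith [hx.2]
      have := hηb hxd hx.1
      rw [Real.dist_eq, abs_lt] at this
      have hg : (0:ℝ) < (x - a) ^ (κ - 1) := Real.rpow_pos_of_pos hxa _
      constructor
      · rw [← sub_nonneg]
        have : (A - κ * δ / 2) < f x / (x - a) ^ (κ - 1) := by linarith [this.1]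
        nlinarith [(lt_div_iff₀ hg).mp this]
      · have : f x / (x - a) ^ (κ - 1) < (A + κ * δ / 2) := by linarith [this.2]
        nlinarith [(div_lt_iff₀ hg).mp this]
    have hgint := aux_integrableOn a ε κ hε hκ
    have hupper : F ε ≤ (A + κ * δ / 2) * (ε ^ κ / κ) := by
      rw [← aux_int a ε κ hε hκ, ← integral_const_mul]
      exact setIntegral_mono_on hf_integrable.integrableOn (hgint.const_mul _)
        measurableSet_Ioc (fun x hx => (hbound x hx).2)
    have hlower : (A - κ * δ / 2) * (ε ^ κ / κ) ≤ F ε := by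
      rw [← aux_int a ε κ hε hκ, ← integral_const_mul]
      exact setIntegral_mono_on (hgint.const_mul _) hf_integrable.integrableOn
        measurableSet_Ioc (fun x hx => (hbound x hx).1)
    have hκ0 : κ ≠ 0 := hκ.ne'
    have e1 : (A + κ * δ / 2) * (ε ^ κ / κ) = (A / κ + δ / 2) * ε ^ κ := by
      field_simp
    have e2 : (A - κ * δ / 2) * (ε ^ κ / κ) = (A / κ - δ / 2) * ε ^ κ := by
      field_simp
    have hub : F ε / ε ^ κ ≤ A / κ + δ / 2 := by
      rw [div_le_iff₀ hεκ]; rw [e1] at hupper; linarith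
    have hlb : A / κ - δ / 2 ≤ F ε / ε ^ κ := by
      rw [le_div_iff₀ hεκ]; rw [e2] at hlower; linarith
    rw [Real.dist_eq, abs_lt]
    constructor <;> linarith
  -- ε ^ κ → 0
  have hεκ0 : Tendsto (fun ε : ℝ => ε ^ κ) (𝓝[>] (0:ℝ)) (𝓝 0) := by
    have h := (Real.continuousAt_rpow_const 0 κ (Or.inr hκ.le)).tendsto
    rw [Real.zero_rpow hκ.ne'] at h
    exact h.mono_left nhdsWithin_le_nhds
  -- F → 0
  have hF0 : Tendsto F (𝓝[>] (0:ℝ)) (𝓝 0) := by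
    have h := hFlim.mul hεκ0
    rw [mul_zero] at h
    refine h.congr' ?_
    filter_upwards [self_mem_nhdsWithin] with ε hε
    have : (ε:ℝ) ^ κ ≠ 0 := (Real.rpow_pos_of_pos hε κ).ne'
    field_simp
  -- eventually 0 < F ε
  have hFpos : ∀ᶠ ε in 𝓝[>] (0:ℝ), 0 < F ε := by
    filter_upwards [hFlim.eventually (eventually_gt_nhds (div_pos hA hκ)),
      self_mem_nhdsWithin] with ε h1 h2
    have hεκ : 0 < (ε:ℝ) ^ κ := Real.rpow_pos_of_pos h2 κ
    by_contra h
    push_neg at h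
    have : F ε / ε ^ κ ≤ 0 := div_nonpos_iff.mpr (Or.inr ⟨h, hεκ.le⟩)
    linarith
  -- the log slope
  have hderiv : HasDerivAt Real.log 1 1 := by
    have := Real.hasDerivAt_log one_ne_zero
    rwa [inv_one] at this
  have hslope := hasDerivAt_iff_tendsto_slope.mp hderiv
  have hcomp : Tendsto (fun ε => 1 - F ε) (𝓝[>] (0:ℝ)) (𝓝[≠] (1:ℝ)) := by
    rw [tendsto_nhdsWithin_iff]
    constructor
    · have := (tendsto_const_nhds (x := (1:ℝ)) (f := 𝓝[>] (0:ℝ))).sub hF0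
      rwa [sub_zero] at this
    · filter_upwards [hFpos] with ε h
      simp only [mem_compl_iff, mem_singleton_iff]
      intro hc
      have : F ε = 0 := by linarith [sub_eq_self.mp hc]
      linarith
  have hlog : Tendsto (fun ε => slope Real.log 1 (1 - F ε)) (𝓝[>] (0:ℝ)) (𝓝 1) :=
    hslope.comp hcomp
  have hmul := hlog.mul hFlim
  rw [one_mul] at hmul
  refine hmul.congr' ?_
  filter_upwards [hFpos, hF0.eventually (eventually_lt_nhds one_pos), self_mem_nhdsWithin]
    with ε hpos hlt1 hε
  have hεpos : (0:ℝ) < ε := hε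
  rw [hsplit ε hεpos]
  rw [slope_def_field]
  have h1 : F ε ≠ 0 := ne_of_gt hpos
  have h2 : (ε:ℝ) ^ κ ≠ 0 := (Real.rpow_pos_of_pos hεpos κ).ne'
  rw [Real.log_one]
  rw [sub_zero, show (1:ℝ) - F ε - 1 = -F ε by ring, div_neg, neg_mul, div_mul_div_comm,
    mul_comm (Real.log _) (F ε), mul_div_mul_left _ _ h1, neg_div]
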